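/- Let n = 2h ≥ m + 2 and ℓ = n - 1. For each k with 1 ≤ k ≤ m, there is exactly one pair (x, y) ∈ (ℤ/ℓℤ)² satisfying (1-2k)x + 2k·y = 2k, x = 0, and 2y - x = 2; and for k' ≠ k with 1 ≤ k' ≤ m, there is no pair (x, y) satisfying (1-2k')x + 2k'·y = 2k, x = 0, and 2y - x = 2. -/
import Mathlib


theorem pairwise_inequivalent_colorings (m n h ℓ : ℕ) (hn : n = 2 * h)
    (hm : m + 2 ≤ n) (hℓ : ℓ = n - 1) (k : ℕ) (hk1 : 1 ≤ k) (hkm : k ≤ m) :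
    (∃! p : ZMod ℓ × ZMod ℓ,
        (1 - 2 * (k : ZMod ℓ)) * p.1 + 2 * (k : ZMod ℓ) * p.2 = 2 * (k : ZMod ℓ) ∧
        p.1 = 0 ∧ 2 * p.2 - p.1 = 2) ∧
    (∀ k' : ℕ, 1 ≤ k' → k' ≤ m → k' ≠ k →
      ¬ ∃ p : ZMod ℓ × ZMod ℓ,
        (1 - 2 * (k' : ZMod ℓ)) * p.1 + 2 * (k' : ZMod ℓ) * p.2 = 2 * (k : ZMod ℓ) ∧
        p.1 = 0 ∧ 2 * p.2 - p.1 = 2) := by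
  -- basic arithmetic facts
  have hm1 : 1 ≤ m := le_trans hk1 hkm
  have hn3 : 3 ≤ n := by omega
  have h2h : 2 ≤ h := by omega
  have hn4 : 4 ≤ n := by omega
  have hℓ3 : 3 ≤ ℓ := by omega
  have hodd : Odd ℓ := by
    refine ⟨h - 1, ?_⟩
    omega
  have h2u : IsUnit (2 : ZMod ℓ) := by
    rw [show (2 : ZMod ℓ) = ((2 : ℕ) : ZMod ℓ) by push_cast; ring]
    rw [ZMod.isUnit_iff_coprime]
    have : ¬ 2 ∣ ℓ := by rcases hodd with ⟨t, ht⟩; omega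
    simpa [Nat.coprime_primes, Nat.Prime.coprime_iff_not_dvd Nat.prime_two] using this
  -- uniqueness of y from 2y = 2
  have key : ∀ y : ZMod ℓ, 2 * y = 2 → y = 1 := by
    intro y hy
    have h' : (2 : ZMod ℓ) * y = 2 * 1 := by rw [hy]; ring
    exact h2u.mul_left_cancel h'
  constructor
  · refine ⟨(0, 1), ?_, ?_⟩
    · refine ⟨by ring, rfl, by ring⟩
    · rintro ⟨x, y⟩ ⟨h1, h2, h3⟩
      simp only at h2 h3 ⊢
      subst h2
      have hy : y = 1 := key y (by linear_combination h3)
      simp [hy]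
  · intro k' hk'1 hk'm hne ⟨⟨x, y⟩, h1, h2, h3⟩
    simp only at h1 h2 h3
    subst h2
    have hy : y = 1 := key y (by linear_combination h3)
    subst hy
    have hkk : (2 : ZMod ℓ) * (k' : ZMod ℓ) = 2 * (k : ZMod ℓ) := by
      linear_combination h1
    have hcast : (k' : ZMod ℓ) = (k : ZMod ℓ) := h2u.mul_left_cancel hkk
    have hklt : k < ℓ := by omega
    have hk'lt : k' < ℓ := by omega
    have : k' = k := by
      have := congrArg ZMod.val hcast
      rwa [ZMod.val_natCast_of_lt hk'lt, ZMod.val_natCast_of_lt hklt] at this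
    exact hne this
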